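/- In U_q(sl_2) over ℂ with q not a root of unity, if x lies in the kernel of every finite-dimensional representation of the form V_{1,n} (the (n+1)-dimensional irreducible of type 1), then x = 0. -/

import Mathlib

noncomputable section

/-- Generators of U_q(sl₂). -/
inductive UqGen | E | F | K | Kinv

open UqGen

/-- Defining relations of U_q(sl₂). -/
inductive UqRel (q : ℂ) : FreeAlgebra ℂ UqGen → FreeAlgebra ℂ UqGen → Prop
  | KKinv : UqRel q (FreeAlgebra.ι ℂ K * FreeAlgebra.ι ℂ Kinv) 1
  | KinvK : UqRel q (FreeAlgebra.ι ℂ Kinv * FreeAlgebra.ι ℂ K) 1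
  | KE : UqRel q (FreeAlgebra.ι ℂ K * FreeAlgebra.ι ℂ E)
      (q ^ 2 • (FreeAlgebra.ι ℂ E * FreeAlgebra.ι ℂ K))
  | KF : UqRel q (FreeAlgebra.ι ℂ K * FreeAlgebra.ι ℂ F)
      ((q⁻¹) ^ 2 • (FreeAlgebra.ι ℂ F * FreeAlgebra.ι ℂ K))
  | EF : UqRel q (FreeAlgebra.ι ℂ E * FreeAlgebra.ι ℂ F - FreeAlgebra.ι ℂ F * FreeAlgebra.ι ℂ E)
      ((q - q⁻¹)⁻¹ • (FreeAlgebra.ι ℂ K - FreeAlgebra.ι ℂ Kinv))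

/-- U_q(sl₂) as a quotient of the free algebra. -/
abbrev Uq (q : ℂ) := RingQuot (UqRel q)

/-- The images of the generators in U_q(sl₂). -/
def UqMk (q : ℂ) (g : UqGen) : Uq q := RingQuot.mkAlgHom ℂ (UqRel q) (FreeAlgebra.ι ℂ g)

/-- The quantum integer [m]_q. -/
def qInt (q : ℂ) (m : ℕ) : ℂ := (q ^ m - q⁻¹ ^ m) / (q - q⁻¹)

/-- Action of K on V_{1,n}: K·vⱼ = q^(n-2j) vⱼ. -/
def KMat (q : ℂ) (n : ℕ) : Matrix (Fin (n + 1)) (Fin (n + 1)) ℂ :=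
  Matrix.diagonal fun j => q ^ ((n : ℤ) - 2 * (j : ℤ))

/-- Action of K⁻¹ on V_{1,n}. -/
def KinvMat (q : ℂ) (n : ℕ) : Matrix (Fin (n + 1)) (Fin (n + 1)) ℂ :=
  Matrix.diagonal fun j => q ^ (2 * (j : ℤ) - (n : ℤ))

/-- Action of E on V_{1,n}: E·vⱼ = [j] vⱼ₋₁. -/
def EMat (q : ℂ) (n : ℕ) : Matrix (Fin (n + 1)) (Fin (n + 1)) ℂ :=
  Matrix.of fun i j => if (i : ℕ) + 1 = (j : ℕ) then qInt q j else 0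

/-- Action of F on V_{1,n}: F·vⱼ = [n-j] vⱼ₊₁. -/
def FMat (q : ℂ) (n : ℕ) : Matrix (Fin (n + 1)) (Fin (n + 1)) ℂ :=
  Matrix.of fun i j => if (i : ℕ) = (j : ℕ) + 1 then qInt q (n - (j : ℕ)) else 0

set_option linter.unusedSectionVars false

namespace Stmt7Aux

variable {q : ℂ} (hq0 : q ≠ 0) (hroot : ∀ n : ℕ, 0 < n → q ^ n ≠ 1)

section qfacts
include hq0 hroot

lemma sub_ne : q - q⁻¹ ≠ 0 := by
  intro h
  have h2 : q * q = 1 := by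
    have := sub_eq_zero.mp h
    field_simp at this
    linear_combination this
  exact hroot 2 (by norm_num) (by rw [pow_two]; exact h2)

lemma qpow_ne_qpow {a b : ℤ} (hab : a ≠ b) : q ^ a ≠ q ^ b := by
  intro h
  wlog hlt : b < a generalizing a b
  · exact this hab.symm h.symm (by omega)
  have : q ^ (a - b) = 1 := by
    rw [zpow_sub₀ hq0, h, div_self (zpow_ne_zero _ hq0)]
  have h1 : ((a - b).toNat : ℤ) = a - b := Int.toNat_of_nonneg (by omega)
  refine hroot (a - b).toNat (by omega) ?_
  rw [← zpow_natCast, h1, this]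

omit hq0 hroot in
lemma qInt_zpow (m : ℕ) : qInt q m = (q ^ (m : ℤ) - q ^ (-(m : ℤ))) / (q - q⁻¹) := by
  rw [qInt, zpow_neg, zpow_natCast, inv_pow]

lemma qInt_ne_zero {m : ℕ} (hm : 0 < m) : qInt q m ≠ 0 := by
  rw [qInt_zpow]
  apply div_ne_zero _ (sub_ne hq0 hroot)
  rw [sub_ne_zero]
  exact qpow_ne_qpow hq0 hroot (by omega)

omit hq0 hroot in
lemma qInt_zero : qInt q 0 = 0 := by simp [qInt]

end qfacts

section matrices
include hq0

omit hq0 in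
lemma generic (A A' B B' u u' : ℂ) :
    (A*u - A'*u') * (B*A' - A*B') - (B*A'*u - A*B'*u') * (A - A')
      = (u - u') * (B*A'*A' - A*A*B') := by
  ring

lemma key0 (hs : q - q⁻¹ ≠ 0) (a b : ℤ) :
    (q ^ (a+1) - q ^ (-(a+1))) * (q ^ (b-a) - q ^ (-(b-a)))
      - (q ^ (b-a+1) - q ^ (-(b-a+1))) * (q ^ a - q ^ (-a))
    = (q - q⁻¹) * (q ^ (b-2*a) - q ^ (2*a-b)) := by
  have hA : q ^ a ≠ 0 := zpow_ne_zero _ hq0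
  have hB : q ^ b ≠ 0 := zpow_ne_zero _ hq0
  have e1 : q ^ (a+1) = q ^ a * q := by rw [zpow_add₀ hq0, zpow_one]
  have e2 : q ^ (-(a+1)) = (q ^ a)⁻¹ * q⁻¹ := by
    rw [neg_add, zpow_add₀ hq0, zpow_neg, zpow_neg, zpow_one]
  have e3 : q ^ (b-a) = q ^ b * (q ^ a)⁻¹ := by rw [zpow_sub₀ hq0, div_eq_mul_inv]
  have e4 : q ^ (-(b-a)) = q ^ a * (q ^ b)⁻¹ := by
    rw [neg_sub, zpow_sub₀ hq0, div_eq_mul_inv]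
  have e5 : q ^ (b-a+1) = q ^ b * (q ^ a)⁻¹ * q := by rw [zpow_add₀ hq0, e3, zpow_one]
  have e6 : q ^ (-(b-a+1)) = q ^ a * (q ^ b)⁻¹ * q⁻¹ := by
    rw [neg_add, zpow_add₀ hq0, e4, zpow_neg, zpow_one]
  have e7 : q ^ (b-2*a) = q ^ b * (q ^ a)⁻¹ * (q ^ a)⁻¹ := by
    rw [show b - 2*a = b - a - a by ring, zpow_sub₀ hq0, e3, div_eq_mul_inv]
  have e8 : q ^ (2*a-b) = q ^ a * q ^ a * (q ^ b)⁻¹ := by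
    rw [show 2*a - b = a + a - b by ring, zpow_sub₀ hq0, zpow_add₀ hq0, div_eq_mul_inv]
  have e9 : q ^ (-a) = (q ^ a)⁻¹ := zpow_neg q a
  rw [e1, e2, e3, e4, e5, e6, e7, e8, e9]
  linear_combination generic (q^a) (q^a)⁻¹ (q^b) (q^b)⁻¹ q q⁻¹

lemma key (hs : q - q⁻¹ ≠ 0) (a b : ℤ) :
    (q ^ (a+1) - q ^ (-(a+1))) / (q - q⁻¹) * ((q ^ (b-a) - q ^ (-(b-a))) / (q - q⁻¹))
      - (q ^ (b-a+1) - q ^ (-(b-a+1))) / (q - q⁻¹) * ((q ^ a - q ^ (-a)) / (q - q⁻¹))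
    = (q - q⁻¹)⁻¹ * (q ^ (b-2*a) - q ^ (2*a-b)) := by
  rw [div_mul_div_comm, div_mul_div_comm, div_sub_div_same, key0 hq0 hs,
    mul_div_mul_left _ _ hs, div_eq_inv_mul]

lemma KKinv_rel (n : ℕ) : KMat q n * KinvMat q n = 1 := by
  rw [KMat, KinvMat, Matrix.diagonal_mul_diagonal]
  ext i j
  rw [Matrix.diagonal_apply, Matrix.one_apply]
  split_ifs
  · rw [← zpow_add₀ hq0, show ((n:ℤ) - 2*(i:ℤ)) + (2*(i:ℤ) - n) = 0 by ring, zpow_zero]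
  · rfl

lemma KinvK_rel (n : ℕ) : KinvMat q n * KMat q n = 1 := by
  rw [KMat, KinvMat, Matrix.diagonal_mul_diagonal]
  ext i j
  rw [Matrix.diagonal_apply, Matrix.one_apply]
  split_ifs
  · rw [← zpow_add₀ hq0, show (2*(i:ℤ) - n) + ((n:ℤ) - 2*(i:ℤ)) = 0 by ring, zpow_zero]
  · rfl

omit hq0 in
lemma qsq : (q:ℂ) ^ (2:ℕ) = q ^ (2:ℤ) := by norm_cast

omit hq0 in
lemma qinvsq : (q⁻¹:ℂ) ^ (2:ℕ) = q ^ (-2:ℤ) := by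
  rw [inv_pow, ← zpow_natCast, ← zpow_neg]; norm_num

lemma KE_rel (n : ℕ) : KMat q n * EMat q n = q ^ 2 • (EMat q n * KMat q n) := by
  ext i j
  simp only [KMat, EMat, Matrix.diagonal_mul, Matrix.mul_diagonal, Matrix.smul_apply,
    Matrix.of_apply, smul_eq_mul]
  split_ifs with hij
  · have hj : (j:ℤ) = (i:ℤ) + 1 := by exact_mod_cast hij.symm
    rw [show ((n:ℤ) - 2*(i:ℤ)) = 2 + ((n:ℤ) - 2*(j:ℤ)) by omega, zpow_add₀ hq0, qsq]
    ring
  · ring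

lemma KF_rel (n : ℕ) : KMat q n * FMat q n = (q⁻¹) ^ 2 • (FMat q n * KMat q n) := by
  ext i j
  simp only [KMat, FMat, Matrix.diagonal_mul, Matrix.mul_diagonal, Matrix.smul_apply,
    Matrix.of_apply, smul_eq_mul]
  split_ifs with hij
  · have hj : (i:ℤ) = (j:ℤ) + 1 := by exact_mod_cast hij
    rw [show ((n:ℤ) - 2*(i:ℤ)) = (-2) + ((n:ℤ) - 2*(j:ℤ)) by omega, zpow_add₀ hq0, qinvsq]
    ring
  · ring

omit hq0 in
lemma EF_entry (n : ℕ) (i j : Fin (n+1)) :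
    (EMat q n * FMat q n) i j
      = if (i:ℕ) = (j:ℕ) then qInt q ((i:ℕ)+1) * qInt q (n - (i:ℕ)) else 0 := by
  rw [Matrix.mul_apply]
  by_cases hi : (i:ℕ) + 1 ≤ n
  · rw [Finset.sum_eq_single (⟨(i:ℕ)+1, by omega⟩ : Fin (n+1))]
    · simp only [EMat, FMat, Matrix.of_apply, ite_true]
      by_cases hij : (i:ℕ) = (j:ℕ)
      · rw [if_pos (show (i:ℕ)+1 = (j:ℕ)+1 by omega), if_pos hij, hij]
      · rw [if_neg (show ¬((i:ℕ)+1 = (j:ℕ)+1) by omega), if_neg hij, mul_zero]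
    · intro k _ hk
      simp only [EMat, Matrix.of_apply]
      rw [if_neg, zero_mul]
      intro hc
      exact hk (Fin.ext (show (k:ℕ) = (i:ℕ)+1 by omega))
    · simp
  · have hin : (i:ℕ) = n := by omega
    rw [Finset.sum_eq_zero]
    · rw [eq_comm]
      split_ifs with hij
      · rw [hin, Nat.sub_self, qInt_zero, mul_zero]
      · rfl
    · intro k _
      simp only [EMat, Matrix.of_apply]
      rw [if_neg, zero_mul]
      have := k.isLt
      omega

omit hq0 in
lemma FE_entry (n : ℕ) (i j : Fin (n+1)) :
    (FMat q n * EMat q n) i j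
      = if (i:ℕ) = (j:ℕ) then qInt q (n - (i:ℕ) + 1) * qInt q (i:ℕ) else 0 := by
  rw [Matrix.mul_apply]
  by_cases hi : 1 ≤ (i:ℕ)
  · rw [Finset.sum_eq_single (⟨(i:ℕ)-1, by omega⟩ : Fin (n+1))]
    · simp only [FMat, EMat, Matrix.of_apply]
      have hile : (i:ℕ) ≤ n := by omega
      rw [if_pos (show (i:ℕ) = ((i:ℕ)-1) + 1 by omega)]
      by_cases hij : (i:ℕ) = (j:ℕ)
      · rw [if_pos (show ((i:ℕ)-1)+1 = (j:ℕ) by omega), if_pos hij, ← hij,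
          show n - ((i:ℕ)-1) = n - (i:ℕ) + 1 by omega]
      · rw [if_neg (show ¬(((i:ℕ)-1)+1 = (j:ℕ)) by omega), if_neg hij, mul_zero]
    · intro k _ hk
      simp only [FMat, Matrix.of_apply]
      rw [if_neg, zero_mul]
      intro hc
      exact hk (Fin.ext (show (k:ℕ) = (i:ℕ)-1 by omega))
    · simp
  · have hin : (i:ℕ) = 0 := by omega
    rw [Finset.sum_eq_zero]
    · rw [eq_comm]
      split_ifs with hij
      · rw [hin, qInt_zero, mul_zero]
      · rfl
    · intro k _
      simp only [FMat, Matrix.of_apply]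
      rw [if_neg, zero_mul]
      omega

lemma EF_rel (hs : q - q⁻¹ ≠ 0) (n : ℕ) :
    EMat q n * FMat q n - FMat q n * EMat q n
      = (q - q⁻¹)⁻¹ • (KMat q n - KinvMat q n) := by
  ext i j
  rw [Matrix.sub_apply, EF_entry, FE_entry, Matrix.smul_apply, Matrix.sub_apply]
  simp only [KMat, KinvMat, Matrix.diagonal_apply, smul_eq_mul]
  by_cases hij : (i:ℕ) = (j:ℕ)
  · have hij' : i = j := Fin.ext hij
    rw [if_pos hij, if_pos hij, if_pos hij', if_pos hij']
    have hile : (i:ℕ) ≤ n := by omega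
    have c1 : (((i:ℕ)+1 : ℕ) : ℤ) = (i:ℤ) + 1 := by push_cast; ring
    have c2 : ((n - (i:ℕ) : ℕ) : ℤ) = (n:ℤ) - (i:ℤ) := by
      rw [Nat.cast_sub hile]
    have c3 : ((n - (i:ℕ) + 1 : ℕ) : ℤ) = (n:ℤ) - (i:ℤ) + 1 := by
      push_cast [Nat.cast_sub hile]; ring
    rw [qInt_zpow, qInt_zpow, qInt_zpow, qInt_zpow, c1, c2, c3]
    exact key hq0 hs (i:ℤ) (n:ℤ)
  · rw [if_neg hij, if_neg hij, if_neg (fun hc => hij (congrArg Fin.val hc)),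
      if_neg (fun hc => hij (congrArg Fin.val hc))]
    ring

end matrices


section uq
variable {q : ℂ}

lemma uKKi : UqMk q K * UqMk q Kinv = 1 := by
  have h := RingQuot.mkAlgHom_rel ℂ (UqRel.KKinv (q := q))
  rw [map_mul, map_one] at h
  exact h

lemma uKiK : UqMk q Kinv * UqMk q K = 1 := by
  have h := RingQuot.mkAlgHom_rel ℂ (UqRel.KinvK (q := q))
  rw [map_mul, map_one] at h
  exact h

lemma uKE : UqMk q K * UqMk q E = q ^ 2 • (UqMk q E * UqMk q K) := by
  have h := RingQuot.mkAlgHom_rel ℂ (UqRel.KE (q := q))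
  rw [map_mul, map_smul, map_mul] at h
  exact h

lemma uKF : UqMk q K * UqMk q F = (q⁻¹) ^ 2 • (UqMk q F * UqMk q K) := by
  have h := RingQuot.mkAlgHom_rel ℂ (UqRel.KF (q := q))
  rw [map_mul, map_smul, map_mul] at h
  exact h

lemma uEF : UqMk q E * UqMk q F - UqMk q F * UqMk q E
    = (q - q⁻¹)⁻¹ • (UqMk q K - UqMk q Kinv) := by
  have h := RingQuot.mkAlgHom_rel ℂ (UqRel.EF (q := q))
  rw [map_sub, map_smul, map_sub, map_mul, map_mul] at h
  exact h

/-- Generic: conjugate a commutation relation by the inverse. -/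
lemma conj_helper {A : Type*} [Ring A] [Algebra ℂ A] (Kk Ki X : A)
    (hKKi : Kk * Ki = 1) (hKiK : Ki * Kk = 1) (c : ℂ) (hc : c ≠ 0)
    (hcom : Kk * X = c • (X * Kk)) : Ki * X = c⁻¹ • (X * Ki) := by
  have h1 : X * Ki = c • (Ki * X) := by
    have h2 : Ki * (Kk * X) * Ki = Ki * (c • (X * Kk)) * Ki := by rw [hcom]
    calc X * Ki = Ki * (Kk * X) * Ki := by rw [← mul_assoc, hKiK, one_mul]
    _ = Ki * (c • (X * Kk)) * Ki := h2
    _ = c • (Ki * X * (Kk * Ki)) := by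
        rw [mul_smul_comm, smul_mul_assoc]
        congr 1
        simp only [mul_assoc]
    _ = c • (Ki * X) := by rw [hKKi, mul_one]
  rw [h1, smul_smul, inv_mul_cancel₀ hc, one_smul]

lemma uKiE (hq0 : q ≠ 0) : UqMk q Kinv * UqMk q E = (q ^ 2)⁻¹ • (UqMk q E * UqMk q Kinv) :=
  conj_helper _ _ _ uKKi uKiK _ (pow_ne_zero 2 hq0) uKE

lemma uKiF (hq0 : q ≠ 0) : UqMk q Kinv * UqMk q F = ((q⁻¹) ^ 2)⁻¹ • (UqMk q F * UqMk q Kinv) :=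
  conj_helper _ _ _ uKKi uKiK _ (pow_ne_zero 2 (inv_ne_zero hq0)) uKF

/-- Generic: commute an element past a power. -/
lemma comm_pow {A : Type*} [Ring A] [Algebra ℂ A] (Kk X : A) (c : ℂ)
    (hcom : Kk * X = c • (X * Kk)) (m : ℕ) : Kk * X ^ m = c ^ m • (X ^ m * Kk) := by
  induction m with
  | zero => simp
  | succ m ih =>
    calc Kk * X ^ (m+1) = (Kk * X) * X ^ m := by rw [pow_succ', mul_assoc]
    _ = c • (X * (Kk * X ^ m)) := by rw [hcom, smul_mul_assoc, mul_assoc]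
    _ = c • (X * (c ^ m • (X ^ m * Kk))) := by rw [ih]
    _ = c ^ (m+1) • (X ^ (m+1) * Kk) := by
        rw [mul_smul_comm, smul_smul, ← pow_succ', ← mul_assoc, ← pow_succ']

/-- Generic: commute a power past an element. -/
lemma pow_comm' {A : Type*} [Ring A] [Algebra ℂ A] (Kk X : A) (c : ℂ)
    (hcom : Kk * X = c • (X * Kk)) (m : ℕ) : Kk ^ m * X = c ^ m • (X * Kk ^ m) := by
  induction m with
  | zero => simp
  | succ m ih =>
    calc Kk ^ (m+1) * X = Kk ^ m * (Kk * X) := by rw [pow_succ, mul_assoc]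
    _ = c • (Kk ^ m * (X * Kk)) := by rw [hcom, mul_smul_comm]
    _ = c • ((Kk ^ m * X) * Kk) := by rw [mul_assoc]
    _ = c • ((c ^ m • (X * Kk ^ m)) * Kk) := by rw [ih]
    _ = c ^ (m+1) • (X * Kk ^ (m+1)) := by
        rw [smul_mul_assoc, smul_smul, ← pow_succ', mul_assoc, ← pow_succ]

/-- K^z for z : ℤ. -/
def Kz (q : ℂ) (z : ℤ) : Uq q :=
  if 0 ≤ z then (UqMk q K) ^ z.toNat else (UqMk q Kinv) ^ (-z).toNat

lemma Kz_zero : Kz q 0 = 1 := by simp [Kz]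

lemma K_mul_Kz (z : ℤ) : UqMk q K * Kz q z = Kz q (z + 1) := by
  rcases le_or_gt 0 z with hz | hz
  · rw [Kz, if_pos hz, Kz, if_pos (by omega), show (z+1).toNat = z.toNat + 1 by omega,
      pow_succ']
  · rcases eq_or_lt_of_le (show z ≤ -1 by omega) with hz1 | hz1
    · rw [hz1, show (-1:ℤ) + 1 = 0 by ring, Kz, if_neg (by norm_num), Kz, if_pos le_rfl,
        show ((-(-1:ℤ)).toNat) = 1 by rfl, pow_one, show ((0:ℤ).toNat) = 0 by rfl, pow_zero,
        uKKi]
    · rw [Kz, if_neg (by omega), Kz, if_neg (by omega),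
        show (-z).toNat = ((-(z+1)).toNat) + 1 by omega, pow_succ', ← mul_assoc, uKKi, one_mul]

lemma Ki_mul_Kz (z : ℤ) : UqMk q Kinv * Kz q z = Kz q (z - 1) := by
  rcases lt_trichotomy z 0 with hz | hz | hz
  · rw [Kz, if_neg (by omega), Kz, if_neg (by omega),
      show (-(z-1)).toNat = (-z).toNat + 1 by omega, pow_succ']
  · rw [hz, Kz, if_pos le_rfl, show ((0:ℤ).toNat) = 0 by rfl, pow_zero, mul_one,
      Kz, if_neg (by norm_num), show ((-((0:ℤ)-1)).toNat) = 1 by rfl, pow_one]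
  · rw [Kz, if_pos (by omega), Kz, if_pos (by omega),
      show z.toNat = (z-1).toNat + 1 by omega, pow_succ', ← mul_assoc, uKiK, one_mul]

lemma zpow_helper (hq0 : q ≠ 0) (r z : ℤ) (hz : 0 ≤ z) :
    (q ^ r) ^ z.toNat = q ^ (r * z) := by
  rw [← zpow_natCast (q ^ r) z.toNat, ← zpow_mul, Int.toNat_of_nonneg hz]

lemma Kz_mul_E (hq0 : q ≠ 0) (z : ℤ) :
    Kz q z * UqMk q E = q ^ (2 * z) • (UqMk q E * Kz q z) := by
  rcases le_or_gt 0 z with hz | hz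
  · rw [Kz, if_pos hz, pow_comm' _ _ _ uKE]
    congr 1
    rw [qsq, zpow_helper hq0 2 z hz]
  · rw [Kz, if_neg (by omega), pow_comm' _ _ _ (uKiE hq0)]
    congr 1
    rw [qsq, ← zpow_neg, zpow_helper hq0 (-2) (-z) (by omega)]
    congr 1
    ring

lemma Kz_mul_F (hq0 : q ≠ 0) (z : ℤ) :
    Kz q z * UqMk q F = q ^ (-(2 * z)) • (UqMk q F * Kz q z) := by
  rcases le_or_gt 0 z with hz | hz
  · rw [Kz, if_pos hz, pow_comm' _ _ _ uKF]
    congr 1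
    rw [qinvsq, zpow_helper hq0 (-2) z hz]
    congr 1
    ring
  · rw [Kz, if_neg (by omega), pow_comm' _ _ _ (uKiF hq0)]
    congr 1
    rw [qinvsq, ← zpow_neg, neg_neg, zpow_helper hq0 2 (-z) (by omega)]
    congr 1
    ring

lemma smul_swap {A : Type*} [AddCommMonoid A] [Module ℂ A] {X Y : A} {c : ℂ} (hc : c ≠ 0)
    (h : X = c • Y) : Y = c⁻¹ • X := by
  rw [h, smul_smul, inv_mul_cancel₀ hc, one_smul]

end uq

section rep
variable {q : ℂ}

/-- Matrices for the generators. -/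
def matOf (q : ℂ) (n : ℕ) : UqGen → Matrix (Fin (n+1)) (Fin (n+1)) ℂ
  | UqGen.E => EMat q n
  | UqGen.F => FMat q n
  | UqGen.K => KMat q n
  | UqGen.Kinv => KinvMat q n

/-- The representation V_{1,n}. -/
def rep (hq0 : q ≠ 0) (hs : q - q⁻¹ ≠ 0) (n : ℕ) :
    Uq q →ₐ[ℂ] Matrix (Fin (n+1)) (Fin (n+1)) ℂ :=
  RingQuot.liftAlgHom ℂ ⟨FreeAlgebra.lift ℂ (matOf q n), by
    rintro a b ⟨⟩ <;>
      simp only [map_mul, map_smul, map_sub, map_one, FreeAlgebra.lift_ι_apply, matOf]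
    · exact KKinv_rel hq0 n
    · exact KinvK_rel hq0 n
    · exact KE_rel hq0 n
    · exact KF_rel hq0 n
    · exact EF_rel hq0 hs n⟩

lemma rep_gen (hq0 : q ≠ 0) (hs : q - q⁻¹ ≠ 0) (n : ℕ) (g : UqGen) :
    rep hq0 hs n (UqMk q g) = matOf q n g := by
  rw [UqMk, rep, RingQuot.liftAlgHom_mkAlgHom_apply, FreeAlgebra.lift_ι_apply]

end rep

section pbw
variable {q : ℂ}

/-- PBW monomials. -/
def PBW (q : ℂ) (p : ℕ × ℤ × ℕ) : Uq q :=
  (UqMk q F) ^ p.1 * Kz q p.2.1 * (UqMk q E) ^ p.2.2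

/-- The span of PBW monomials. -/
def SpanS (q : ℂ) : Submodule ℂ (Uq q) := Submodule.span ℂ (Set.range (PBW q))

lemma PBW_mem (p : ℕ × ℤ × ℕ) : PBW q p ∈ SpanS q := Submodule.subset_span ⟨p, rfl⟩

lemma one_mem_S : (1 : Uq q) ∈ SpanS q := by
  have h : PBW q (0, 0, 0) = 1 := by simp [PBW, Kz_zero]
  rw [← h]; exact PBW_mem _

lemma F_mul_PBW (p : ℕ × ℤ × ℕ) :
    UqMk q F * PBW q p = PBW q (p.1 + 1, p.2.1, p.2.2) := by
  rcases p with ⟨a, z, c⟩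
  simp only [PBW, pow_succ', mul_assoc]

lemma K_mul_PBW (p : ℕ × ℤ × ℕ) :
    UqMk q K * PBW q p = ((q⁻¹) ^ 2) ^ p.1 • PBW q (p.1, p.2.1 + 1, p.2.2) := by
  rcases p with ⟨a, z, c⟩
  show UqMk q K * (UqMk q F ^ a * Kz q z * UqMk q E ^ c) = _
  rw [← mul_assoc, ← mul_assoc, comm_pow _ _ _ uKF, smul_mul_assoc, smul_mul_assoc,
    mul_assoc (UqMk q F ^ a), K_mul_Kz]
  rfl

lemma Ki_mul_PBW (hq0 : q ≠ 0) (p : ℕ × ℤ × ℕ) :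
    UqMk q Kinv * PBW q p = (((q⁻¹) ^ 2)⁻¹) ^ p.1 • PBW q (p.1, p.2.1 - 1, p.2.2) := by
  rcases p with ⟨a, z, c⟩
  show UqMk q Kinv * (UqMk q F ^ a * Kz q z * UqMk q E ^ c) = _
  rw [← mul_assoc, ← mul_assoc, comm_pow _ _ _ (uKiF hq0), smul_mul_assoc, smul_mul_assoc,
    mul_assoc (UqMk q F ^ a), Ki_mul_Kz]
  rfl

lemma E_mul_PBW_zero (hq0 : q ≠ 0) (z : ℤ) (c : ℕ) :
    UqMk q E * PBW q (0, z, c) = (q ^ (2 * z))⁻¹ • PBW q (0, z, c + 1) := by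
  have hE : UqMk q E * Kz q z = (q ^ (2 * z))⁻¹ • (Kz q z * UqMk q E) := by
    exact smul_swap (zpow_ne_zero _ hq0) (Kz_mul_E hq0 z)
  show UqMk q E * (UqMk q F ^ 0 * Kz q z * UqMk q E ^ c) = _
  rw [pow_zero, one_mul, ← mul_assoc, hE, smul_mul_assoc, mul_assoc, ← pow_succ']
  show _ = _ • (UqMk q F ^ 0 * Kz q z * UqMk q E ^ (c+1))
  rw [pow_zero, one_mul]

/-- Closure of the span under left multiplication, given closure on generators. -/
lemma closed_of_gen {y : Uq q} (hy : ∀ p, y * PBW q p ∈ SpanS q) :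
    ∀ s ∈ SpanS q, y * s ∈ SpanS q := by
  intro s hs
  induction hs using Submodule.span_induction with
  | mem u hu => obtain ⟨p, rfl⟩ := hu; exact hy p
  | zero => rw [mul_zero]; exact zero_mem _
  | add u v _ _ hu hv => rw [mul_add]; exact add_mem hu hv
  | smul k u _ hu => rw [mul_smul_comm]; exact Submodule.smul_mem _ _ hu

lemma F_closed : ∀ s ∈ SpanS q, UqMk q F * s ∈ SpanS q :=
  closed_of_gen fun p => by rw [F_mul_PBW]; exact PBW_mem _

lemma K_closed : ∀ s ∈ SpanS q, UqMk q K * s ∈ SpanS q :=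
  closed_of_gen fun p => by rw [K_mul_PBW]; exact Submodule.smul_mem _ _ (PBW_mem _)

lemma Ki_closed (hq0 : q ≠ 0) : ∀ s ∈ SpanS q, UqMk q Kinv * s ∈ SpanS q :=
  closed_of_gen fun p => by rw [Ki_mul_PBW hq0]; exact Submodule.smul_mem _ _ (PBW_mem _)

lemma E_mul_PBW (hq0 : q ≠ 0) (p : ℕ × ℤ × ℕ) : UqMk q E * PBW q p ∈ SpanS q := by
  rcases p with ⟨a, z, c⟩
  induction a generalizing z c with
  | zero => rw [E_mul_PBW_zero hq0]; exact Submodule.smul_mem _ _ (PBW_mem _)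
  | succ a ih =>
    have hEF : UqMk q E * UqMk q F
        = UqMk q F * UqMk q E + (q - q⁻¹)⁻¹ • (UqMk q K - UqMk q Kinv) := by
      rw [← uEF]; abel
    have hsplit : UqMk q E * PBW q (a + 1, z, c)
        = UqMk q F * (UqMk q E * PBW q (a, z, c))
          + (q - q⁻¹)⁻¹ • (UqMk q K * PBW q (a, z, c))
          - (q - q⁻¹)⁻¹ • (UqMk q Kinv * PBW q (a, z, c)) := by
      have h1 : UqMk q F * PBW q (a, z, c) = PBW q (a + 1, z, c) := F_mul_PBW _
      rw [← h1, ← mul_assoc, hEF]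
      simp only [add_mul, sub_mul, smul_mul_assoc, smul_sub, mul_assoc]
      ring_nf
      abel
    rw [hsplit]
    refine sub_mem (add_mem (F_closed _ (ih z c)) (Submodule.smul_mem _ _ ?_))
      (Submodule.smul_mem _ _ ?_)
    · rw [K_mul_PBW]; exact Submodule.smul_mem _ _ (PBW_mem _)
    · rw [Ki_mul_PBW hq0]; exact Submodule.smul_mem _ _ (PBW_mem _)

lemma E_closed (hq0 : q ≠ 0) : ∀ s ∈ SpanS q, UqMk q E * s ∈ SpanS q :=
  closed_of_gen (E_mul_PBW hq0)

lemma spanning (hq0 : q ≠ 0) (x : Uq q) : x ∈ SpanS q := by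
  obtain ⟨y, rfl⟩ := RingQuot.mkAlgHom_surjective ℂ (UqRel q) x
  have main : ∀ y : FreeAlgebra ℂ UqGen, ∀ s ∈ SpanS q,
      RingQuot.mkAlgHom ℂ (UqRel q) y * s ∈ SpanS q := by
    intro y
    induction y using FreeAlgebra.induction with
    | grade0 r =>
      intro s hs
      rw [AlgHom.commutes, ← Algebra.smul_def]
      exact Submodule.smul_mem _ _ hs
    | grade1 g =>
      cases g
      · exact E_closed hq0
      · exact F_closed
      · exact K_closed
      · exact Ki_closed hq0
    | mul a b ha hb => intro s hs; rw [map_mul, mul_assoc]; exact ha _ (hb s hs)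
    | add a b ha hb => intro s hs; rw [map_add, add_mul]; exact add_mem (ha s hs) (hb s hs)
  have h1 := main y 1 one_mem_S
  rwa [mul_one] at h1

end pbw

section vectors
open Matrix
variable {q : ℂ}

/-- Basis vector (zero if out of range). -/
def bv (n j : ℕ) : Fin (n+1) → ℂ :=
  if h : j ≤ n then Pi.single (⟨j, by omega⟩ : Fin (n+1)) 1 else 0

lemma bv_apply (n j a : ℕ) (ha : a < n + 1) :
    bv n j ⟨a, ha⟩ = if j = a then 1 else 0 := by
  rw [bv]
  split_ifs with h1 h2 h2
  · subst h2; exact Pi.single_eq_same _ _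
  · exact Pi.single_eq_of_ne (fun hc => h2 (congrArg Fin.val hc).symm) _
  · omega
  · rfl

lemma E_bv (n j : ℕ) (hj : j ≤ n) :
    EMat q n *ᵥ bv n j = qInt q j • bv n (j - 1) := by
  rcases Nat.eq_zero_or_pos j with hj0 | hj0
  · subst hj0
    rw [qInt_zero, zero_smul, bv, dif_pos hj]
    funext i
    simp only [Matrix.mulVec_single_one, Matrix.col_apply, EMat, Matrix.of_apply, mul_one, Pi.zero_apply]
    rw [if_neg (by omega)]
  · rw [bv, dif_pos hj, bv, dif_pos (show j - 1 ≤ n by omega), Matrix.mulVec_single_one]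
    funext i
    simp only [Matrix.col_apply, EMat, Matrix.of_apply, mul_one, Pi.smul_apply, smul_eq_mul]
    by_cases hi : (i:ℕ) + 1 = j
    · rw [if_pos hi, show i = (⟨j-1, by omega⟩ : Fin (n+1)) from Fin.ext (show (i:ℕ) = j - 1 by omega),
        Pi.single_eq_same, mul_one]
    · rw [if_neg hi, Pi.single_eq_of_ne (fun hc => hi (by
        have := congrArg Fin.val hc
        simp at this
        omega)), mul_zero]

lemma F_bv (n j : ℕ) (hj : j ≤ n) :
    FMat q n *ᵥ bv n j = qInt q (n - j) • bv n (j + 1) := by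
  rcases eq_or_lt_of_le hj with hjn | hjn
  · subst hjn
    rw [Nat.sub_self, qInt_zero, zero_smul, bv, dif_pos hj]
    funext i
    simp only [Matrix.mulVec_single_one, Matrix.col_apply, FMat, Matrix.of_apply, mul_one, Pi.zero_apply]
    rw [if_neg (by omega)]
  · rw [bv, dif_pos hj, bv, dif_pos (show j + 1 ≤ n by omega), Matrix.mulVec_single_one]
    funext i
    simp only [Matrix.col_apply, FMat, Matrix.of_apply, mul_one, Pi.smul_apply, smul_eq_mul]
    by_cases hi : (i:ℕ) = j + 1
    · rw [if_pos hi, show i = (⟨j+1, by omega⟩ : Fin (n+1)) from Fin.ext (show (i:ℕ) = j + 1 by omega),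
        Pi.single_eq_same, mul_one]
    · rw [if_neg hi, Pi.single_eq_of_ne (fun hc => hi (by
        have := congrArg Fin.val hc
        simp at this
        omega)), mul_zero]

/-- The diagonal matrix for K^z. -/
def Kdiag (q : ℂ) (n : ℕ) (z : ℤ) : Matrix (Fin (n+1)) (Fin (n+1)) ℂ :=
  Matrix.diagonal fun i => q ^ (z * ((n:ℤ) - 2 * ((i:ℕ):ℤ)))

lemma repKz (hq0 : q ≠ 0) (hs : q - q⁻¹ ≠ 0) (n : ℕ) (z : ℤ) :
    rep hq0 hs n (Kz q z) = Kdiag q n z := by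
  rcases le_or_gt 0 z with hz | hz
  · rw [Kz, if_pos hz, map_pow, rep_gen]
    show (KMat q n) ^ z.toNat = _
    rw [KMat, Matrix.diagonal_pow, Kdiag]
    exact congrArg Matrix.diagonal (funext fun i => by
      rw [Pi.pow_apply, zpow_helper hq0 _ _ hz]; congr 1; ring)
  · rw [Kz, if_neg (by omega), map_pow, rep_gen]
    show (KinvMat q n) ^ (-z).toNat = _
    rw [KinvMat, Matrix.diagonal_pow, Kdiag]
    exact congrArg Matrix.diagonal (funext fun i => by
      rw [Pi.pow_apply, zpow_helper hq0 _ _ (by omega : (0:ℤ) ≤ -z)]; congr 1; ring)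

lemma Kdiag_bv (n j : ℕ) (hj : j ≤ n) (z : ℤ) :
    Kdiag q n z *ᵥ bv n j = q ^ (z * ((n:ℤ) - 2 * (j:ℤ))) • bv n j := by
  rw [bv, dif_pos hj, Kdiag, Matrix.diagonal_mulVec_single, mul_one, ← Pi.single_smul,
    smul_eq_mul, mul_one]

lemma Epow_bv (n c j : ℕ) (hj : j ≤ n) :
    (EMat q n) ^ c *ᵥ bv n j
      = (∏ t ∈ Finset.range c, qInt q (j - t)) • bv n (j - c) := by
  induction c generalizing j with
  | zero => simp
  | succ c ih =>
    rw [pow_succ, ← Matrix.mulVec_mulVec, E_bv n j hj, Matrix.mulVec_smul,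
      ih (j-1) (by omega), smul_smul, show j - 1 - c = j - (c + 1) by omega]
    congr 1
    rw [Finset.prod_range_succ', Nat.sub_zero, mul_comm]
    congr 1
    exact Finset.prod_congr rfl fun t _ => by congr 1; omega

lemma Fpow_bv (n a j : ℕ) (hj : j ≤ n) :
    (FMat q n) ^ a *ᵥ bv n j
      = (∏ t ∈ Finset.range a, qInt q (n - j - t)) • bv n (j + a) := by
  induction a generalizing j with
  | zero => simp
  | succ a ih =>
    rw [pow_succ, ← Matrix.mulVec_mulVec, F_bv n j hj, Matrix.mulVec_smul]
    rcases eq_or_lt_of_le hj with hjn | hjn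
    · subst hjn
      rw [Nat.sub_self, qInt_zero, zero_smul]
      have hzero : (∏ t ∈ Finset.range (a+1), qInt q (0 - t)) = 0 :=
        Finset.prod_eq_zero (i := 0) (Finset.mem_range.mpr (Nat.succ_pos a)) qInt_zero
      rw [hzero, zero_smul]
    · rw [ih (j+1) (by omega), smul_smul, show j + 1 + a = j + (a + 1) by omega]
      congr 1
      rw [Finset.prod_range_succ', Nat.sub_zero, mul_comm]
      congr 1
      exact Finset.prod_congr rfl fun t _ => by congr 1; omega

end vectors

section laurent
open Polynomial
include hq0 hroot

lemma laurent (s : Finset ℤ) (f : ℤ → ℂ) (N : ℕ)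
    (hvan : ∀ n : ℕ, N ≤ n → ∑ z ∈ s, f z * q ^ (z * (n:ℤ)) = 0) :
    ∀ z ∈ s, f z = 0 := by
  classical
  set D : ℕ := s.sup fun z => (-z).toNat with hD
  have hzD : ∀ z ∈ s, 0 ≤ z + (D:ℤ) := by
    intro z hz
    have h1 : (-z).toNat ≤ D := Finset.le_sup (f := fun z => (-z).toNat) hz
    omega
  set P : Polynomial ℂ := ∑ z ∈ s, Polynomial.C (f z) * Polynomial.X ^ ((z + D).toNat)
    with hP
  have heval : ∀ n : ℕ, N ≤ n → Polynomial.eval (q ^ ((n:ℕ):ℤ)) P = 0 := by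
    intro n hn
    rw [hP, Polynomial.eval_finset_sum]
    have hterm : ∀ z ∈ s, Polynomial.eval (q ^ ((n:ℕ):ℤ)) (Polynomial.C (f z) * Polynomial.X ^ ((z + D).toNat))
        = (f z * q ^ (z * (n:ℤ))) * q ^ ((D:ℤ) * (n:ℤ)) := by
      intro z hz
      rw [Polynomial.eval_mul, Polynomial.eval_C, Polynomial.eval_pow, Polynomial.eval_X,
        zpow_helper hq0 _ _ (hzD z hz), mul_assoc, ← zpow_add₀ hq0]
      congr 2
      ring
    rw [Finset.sum_congr rfl hterm, ← Finset.sum_mul, hvan n hn, zero_mul]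
  have hPzero : P = 0 := by
    apply Polynomial.eq_zero_of_infinite_isRoot
    apply Set.infinite_of_injective_forall_mem (f := fun k : ℕ => q ^ (((N + k : ℕ):ℕ):ℤ))
    · intro k1 k2 hk
      by_contra hne
      exact qpow_ne_qpow hq0 hroot (by omega : ((N + k1 : ℕ):ℤ) ≠ ((N + k2 : ℕ):ℤ)) hk
    · intro k
      exact heval (N + k) (Nat.le_add_right _ _)
  intro z hz
  have hco : P.coeff ((z + D).toNat) = f z := by
    rw [hP, Polynomial.finset_sum_coeff, Finset.sum_eq_single z]
    · rw [Polynomial.coeff_C_mul, Polynomial.coeff_X_pow, if_pos rfl, mul_one]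
    · intro w hw hwz
      rw [Polynomial.coeff_C_mul, Polynomial.coeff_X_pow, if_neg, mul_zero]
      have h1 := hzD w hw
      have h2 := hzD z hz
      omega
    · intro hzs; exact absurd hz hzs
  rw [hPzero, Polynomial.coeff_zero] at hco
  exact hco.symm

end laurent

section assembly
open Matrix

lemma sum_mulVec {m k : Type*} [Fintype k] {ι : Type*} (s : Finset ι)
    (M : ι → Matrix m k ℂ) (v : k → ℂ) :
    (∑ i ∈ s, M i) *ᵥ v = ∑ i ∈ s, (M i *ᵥ v) := by
  classical
  induction s using Finset.induction_on with
  | empty => simp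
  | insert _ _ hnm ih =>
    rw [Finset.sum_insert hnm, Finset.sum_insert hnm, Matrix.add_mulVec, ih]

lemma V_formula (hq0 : q ≠ 0) (hs : q - q⁻¹ ≠ 0) (n Cc : ℕ) (hC : Cc ≤ n)
    (p : ℕ × ℤ × ℕ) :
    rep hq0 hs n (PBW q p) *ᵥ bv n Cc
      = ((∏ t ∈ Finset.range p.2.2, qInt q (Cc - t))
          * q ^ (p.2.1 * ((n:ℤ) - 2 * ((Cc - p.2.2 : ℕ):ℤ)))
          * (∏ t ∈ Finset.range p.1, qInt q (n - (Cc - p.2.2) - t)))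
        • bv n ((Cc - p.2.2) + p.1) := by
  rcases p with ⟨a, z, c⟩
  show rep hq0 hs n ((UqMk q F) ^ a * Kz q z * (UqMk q E) ^ c) *ᵥ bv n Cc
      = ((∏ t ∈ Finset.range c, qInt q (Cc - t))
          * q ^ (z * ((n:ℤ) - 2 * ((Cc - c : ℕ):ℤ)))
          * (∏ t ∈ Finset.range a, qInt q (n - (Cc - c) - t)))
        • bv n ((Cc - c) + a)
  rw [_root_.map_mul, _root_.map_mul, map_pow, map_pow, rep_gen, rep_gen, repKz]
  show (FMat q n ^ a * Kdiag q n z * EMat q n ^ c) *ᵥ bv n Cc = _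
  rw [← Matrix.mulVec_mulVec, ← Matrix.mulVec_mulVec, Epow_bv n c Cc hC,
    Matrix.mulVec_smul, Kdiag_bv n _ (by omega) z, Matrix.mulVec_smul, Matrix.mulVec_smul,
    Fpow_bv n a _ (by omega), smul_smul, smul_smul]

end assembly
end Stmt7Aux


/-- If q is not a root of unity, and x ∈ U_q(sl₂) lies in the kernel of every
representation of the form V_{1,n} (the (n+1)-dimensional irreducible of type 1),
then x = 0. -/
theorem stmt7 (q : ℂ) (hq0 : q ≠ 0) (hroot : ∀ n : ℕ, 0 < n → q ^ n ≠ 1)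
    (x : Uq q)
    (h : ∀ (n : ℕ) (ρ : Uq q →ₐ[ℂ] Matrix (Fin (n + 1)) (Fin (n + 1)) ℂ),
      ρ (UqMk q E) = EMat q n → ρ (UqMk q F) = FMat q n →
      ρ (UqMk q K) = KMat q n → ρ (UqMk q Kinv) = KinvMat q n →
      ρ x = 0) :
    x = 0 := by
  classical
  have hs : q - q⁻¹ ≠ 0 := Stmt7Aux.sub_ne hq0 hroot
  have hrep : ∀ n, Stmt7Aux.rep hq0 hs n x = 0 := fun n =>
    h n (Stmt7Aux.rep hq0 hs n) (Stmt7Aux.rep_gen hq0 hs n UqGen.E)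
      (Stmt7Aux.rep_gen hq0 hs n UqGen.F) (Stmt7Aux.rep_gen hq0 hs n UqGen.K)
      (Stmt7Aux.rep_gen hq0 hs n UqGen.Kinv)
  have hxS : x ∈ Stmt7Aux.SpanS q := Stmt7Aux.spanning hq0 x
  rw [Stmt7Aux.SpanS] at hxS
  obtain ⟨cf, hcf⟩ := Finsupp.mem_span_range_iff_exists_finsupp.mp hxS
  set A : ℕ := cf.support.sup (fun p => p.1) with hA
  have hall : ∀ Cc : ℕ, ∀ a z, cf (a, z, Cc) = 0 := by
    intro Cc
    induction Cc using Nat.strong_induction_on with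
    | _ Cc IH =>
    intro a₀ z₀
    by_cases hmem : (a₀, z₀, Cc) ∈ cf.support
    · have ha₀A : a₀ ≤ A := Finset.le_sup (f := fun p : ℕ × ℤ × ℕ => p.1) hmem
      have key : ∀ n : ℕ, (Cc + A) ≤ n →
          ∑ z ∈ ((cf.support.filter
              (fun p : ℕ × ℤ × ℕ => p.1 = a₀ ∧ p.2.2 = Cc)).image
              (fun p : ℕ × ℤ × ℕ => p.2.1)),
            cf (a₀, z, Cc) * q ^ (z * (n:ℤ)) = 0 := by
        intro n hn
        have hCn : Cc ≤ n := by omega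
        have ha₀n : a₀ < n + 1 := by omega
        set ε : ℂ := ∏ t ∈ Finset.range Cc, qInt q (Cc - t) with hε
        set π : ℂ := ∏ t ∈ Finset.range a₀, qInt q (n - t) with hπ
        have hvec : (0 : Fin (n+1) → ℂ)
            = cf.sum fun p k =>
                k • (Matrix.mulVec (Stmt7Aux.rep hq0 hs n (Stmt7Aux.PBW q p)) (Stmt7Aux.bv n Cc)) := by
          have h1 : Matrix.mulVec (Stmt7Aux.rep hq0 hs n x) (Stmt7Aux.bv n Cc) = 0 := by
            rw [hrep n, Matrix.zero_mulVec]
          rw [← h1, ← hcf, map_finsuppSum]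
          simp only [Finsupp.sum]
          rw [Stmt7Aux.sum_mulVec]
          apply Finset.sum_congr rfl
          intro p _
          rw [_root_.map_smul, Matrix.smul_mulVec]
        have hcoord := congrFun hvec ⟨a₀, ha₀n⟩
        simp only [Finsupp.sum, Finset.sum_apply, Pi.zero_apply] at hcoord
        have hterm : ∀ p ∈ cf.support,
            (cf p • (Matrix.mulVec (Stmt7Aux.rep hq0 hs n (Stmt7Aux.PBW q p)) (Stmt7Aux.bv n Cc))) ⟨a₀, ha₀n⟩
              = if p.1 = a₀ ∧ p.2.2 = Cc then ε * π * (cf p * q ^ (p.2.1 * (n:ℤ)))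
                else 0 := by
          intro p hp
          rw [Stmt7Aux.V_formula hq0 hs n Cc hCn p, Pi.smul_apply, Pi.smul_apply,
            Stmt7Aux.bv_apply n _ a₀ ha₀n, smul_eq_mul, smul_eq_mul]
          by_cases hc1 : p.2.2 = Cc
          · by_cases hc2 : p.1 = a₀
            · rw [if_pos (show Cc - p.2.2 + p.1 = a₀ by omega),
                if_pos (show p.1 = a₀ ∧ p.2.2 = Cc from ⟨hc2, hc1⟩)]
              simp only [hc1, hc2, Nat.sub_self, Nat.cast_zero, mul_zero, sub_zero,
                Nat.sub_zero, mul_one]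
              rw [hε, hπ]
              ring
            · rw [if_neg (show ¬(Cc - p.2.2 + p.1 = a₀) by omega),
                if_neg (fun hcond : p.1 = a₀ ∧ p.2.2 = Cc => hc2 hcond.1),
                mul_zero, mul_zero]
          · by_cases hc3 : p.2.2 < Cc
            · have hz : cf p = 0 := by
                have h4 := IH p.2.2 hc3 p.1 p.2.1
                rcases p with ⟨pa, pz, pc⟩
                exact h4
              rw [hz, zero_mul, if_neg (fun hcond : p.1 = a₀ ∧ p.2.2 = Cc => hc1 hcond.2)]
            · have hpz : (∏ t ∈ Finset.range p.2.2, qInt q (Cc - t)) = 0 :=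
                Finset.prod_eq_zero (i := Cc) (Finset.mem_range.mpr (by omega))
                  (by rw [Nat.sub_self]; exact Stmt7Aux.qInt_zero)
              rw [hpz, if_neg (fun hcond : p.1 = a₀ ∧ p.2.2 = Cc => hc1 hcond.2)]
              ring
        rw [Finset.sum_congr rfl hterm, ← Finset.sum_filter] at hcoord
        have himg : ∑ p ∈ (cf.support.filter
              (fun p : ℕ × ℤ × ℕ => p.1 = a₀ ∧ p.2.2 = Cc)),
            (ε * π * (cf p * q ^ (p.2.1 * (n:ℤ))))
            = ε * π * ∑ z ∈ ((cf.support.filter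
                (fun p : ℕ × ℤ × ℕ => p.1 = a₀ ∧ p.2.2 = Cc)).image
                (fun p : ℕ × ℤ × ℕ => p.2.1)),
              cf (a₀, z, Cc) * q ^ (z * (n:ℤ)) := by
          rw [Finset.mul_sum, Finset.sum_image]
          · apply Finset.sum_congr rfl
            intro p hp
            rcases p with ⟨pa, pz, pc⟩
            obtain ⟨hps, hpa, hpc⟩ :
                (pa, pz, pc) ∈ cf.support ∧ pa = a₀ ∧ pc = Cc := by
              simpa using hp
            rw [hpa, hpc]
          · intro p1 h1 p2 h2 hz12
            rcases p1 with ⟨p1a, p1z, p1c⟩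
            rcases p2 with ⟨p2a, p2z, p2c⟩
            obtain ⟨hs1, ha1, hc1⟩ :
                (p1a, p1z, p1c) ∈ cf.support ∧ p1a = a₀ ∧ p1c = Cc := by simpa using h1
            obtain ⟨hs2, ha2, hc2⟩ :
                (p2a, p2z, p2c) ∈ cf.support ∧ p2a = a₀ ∧ p2c = Cc := by simpa using h2
            simp only at hz12
            rw [ha1, ha2, hc1, hc2, hz12]
        rw [himg] at hcoord
        have hε0 : ε ≠ 0 := by
          rw [hε]
          apply Finset.prod_ne_zero_iff.mpr
          intro t ht
          exact Stmt7Aux.qInt_ne_zero hq0 hroot (by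
            have := Finset.mem_range.mp ht; omega)
        have hπ0 : π ≠ 0 := by
          rw [hπ]
          apply Finset.prod_ne_zero_iff.mpr
          intro t ht
          exact Stmt7Aux.qInt_ne_zero hq0 hroot (by
            have := Finset.mem_range.mp ht; omega)
        rcases mul_eq_zero.mp hcoord.symm with h5 | h5
        · exact absurd h5 (mul_ne_zero hε0 hπ0)
        · exact h5
      have hL := Stmt7Aux.laurent hq0 hroot _ (fun z => cf (a₀, z, Cc)) (Cc + A) key
      apply hL z₀
      apply Finset.mem_image.mpr
      exact ⟨(a₀, z₀, Cc), Finset.mem_filter.mpr ⟨hmem, rfl, rfl⟩, rfl⟩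
    · exact Finsupp.notMem_support_iff.mp hmem
  have hcf0 : cf = 0 := Finsupp.ext fun p => hall p.2.2 p.1 p.2.1
  rw [← hcf, hcf0, Finsupp.sum_zero_index]

end
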